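/- arXiv:2001.09061 — 7 statements merged into one kernel-verified Lean document; each statement's English description precedes it below -/
import Mathlib

section
/- Let (X, μ) and (Y, ν) be probability spaces (measurable spaces with probability measures), let G : X → Y and F : Y → X be measurable maps forming an exact CycleGAN solution, and let φ : X → X be measurable with φ_*μ = μ and with a measurable map ψ : X → X satisfying ψ ∘ φ = id μ-almost everywhere and φ ∘ ψ = id μ-almost everywhere. Then the pair (G ∘ φ, ψ ∘ F) is again an exact CycleGAN solution, i.e. (G ∘ φ)_*μ = ν, (ψ ∘ F)_*ν = μ, (ψ ∘ F) ∘ (G ∘ φ) = id μ-almost everywhere, and (G ∘ φ) ∘ (ψ ∘ F) = id ν-almost everywhere. -/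
open MeasureTheory

/-- Invariance of the CycleGAN kernel: composing an exact solution with a
probability space automorphism of the source yields again an exact solution. -/
theorem cycleGAN_kernel_invariance
    {X Y : Type*} [MeasurableSpace X] [MeasurableSpace Y]
    (μ : Measure X) (ν : Measure Y)
    [IsProbabilityMeasure μ] [IsProbabilityMeasure ν]
    (G : X → Y) (F : Y → X) (hG : Measurable G) (hF : Measurable F)
    (hGmap : μ.map G = ν) (hFmap : ν.map F = μ)
    (hFG : F ∘ G =ᵐ[μ] id) (hGF : G ∘ F =ᵐ[ν] id)
    (φ ψ : X → X) (hφ : Measurable φ) (hψ : Measurable ψ)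
    (hφmap : μ.map φ = μ)
    (hψφ : ψ ∘ φ =ᵐ[μ] id) (hφψ : φ ∘ ψ =ᵐ[μ] id) :
    μ.map (G ∘ φ) = ν ∧ ν.map (ψ ∘ F) = μ ∧
      (ψ ∘ F) ∘ (G ∘ φ) =ᵐ[μ] id ∧ (G ∘ φ) ∘ (ψ ∘ F) =ᵐ[ν] id := by
  -- ψ is also measure preserving
  have hψmap : μ.map ψ = μ := by
    calc μ.map ψ = (μ.map φ).map ψ := by rw [hφmap]
    _ = μ.map (ψ ∘ φ) := Measure.map_map hψ hφ
    _ = μ.map id := Measure.map_congr hψφ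
    _ = μ := Measure.map_id
  refine ⟨?_, ?_, ?_, ?_⟩
  · rw [← Measure.map_map hG hφ, hφmap, hGmap]
  · rw [← Measure.map_map hψ hF, hFmap, hψmap]
  · -- pull back F∘G = id along φ
    have h1 : (F ∘ G) ∘ φ =ᵐ[μ] id ∘ φ :=
      ae_eq_comp hφ.aemeasurable (by rw [hφmap]; exact hFG)
    filter_upwards [h1, hψφ] with x h1x h2x
    simp only [Function.comp_apply, id_eq] at *
    rw [h1x]; exact h2x
  · have h2 : (φ ∘ ψ) ∘ F =ᵐ[ν] id ∘ F :=
      ae_eq_comp hF.aemeasurable (by rw [hFmap]; exact hφψ)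
    filter_upwards [h2, hGF] with y h2y hgy
    simp only [Function.comp_apply, id_eq] at *
    rw [h2y]; exact hgy
end

section
/- Let (X, μ) and (Y, ν) be probability spaces, let G : X → Y and F : Y → X be measurable maps forming an exact CycleGAN solution, and let φ : X → X be measurable with φ_*μ = μ and with a measurable map ψ : X → X satisfying ψ ∘ φ = id μ-almost everywhere and φ ∘ ψ = id μ-almost everywhere. If φ is not μ-almost everywhere equal to the identity map, then G ∘ φ is not μ-almost everywhere equal to G, and ψ ∘ F is not ν-almost everywhere equal to F. -/
open MeasureTheory

/-- If the automorphism `φ` is nontrivial (not a.e. equal to the identity), then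
the perturbed exact CycleGAN solution `(G ∘ φ, ψ ∘ F)` genuinely differs from `(G, F)`. -/
theorem cycleGAN_kernel_nontrivial_perturbation
    {X Y : Type*} [MeasurableSpace X] [MeasurableSpace Y]
    (μ : Measure X) (ν : Measure Y)
    [IsProbabilityMeasure μ] [IsProbabilityMeasure ν]
    (G : X → Y) (F : Y → X) (hG : Measurable G) (hF : Measurable F)
    (hGmap : μ.map G = ν) (hFmap : ν.map F = μ)
    (hFG : F ∘ G =ᵐ[μ] id) (hGF : G ∘ F =ᵐ[ν] id)
    (φ ψ : X → X) (hφ : Measurable φ) (hψ : Measurable ψ)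
    (hφmap : μ.map φ = μ)
    (hψφ : ψ ∘ φ =ᵐ[μ] id) (hφψ : φ ∘ ψ =ᵐ[μ] id)
    (hφne : ¬ (φ =ᵐ[μ] id)) :
    ¬ (G ∘ φ =ᵐ[μ] G) ∧ ¬ (ψ ∘ F =ᵐ[ν] F) := by
  constructor
  · intro h
    apply hφne
    -- F ∘ G =ᵐ id pulled back along φ
    have h1 : (F ∘ G) ∘ φ =ᵐ[μ] id ∘ φ := by
      apply ae_eq_comp hφ.aemeasurable
      rw [hφmap]; exact hFG
    -- F ∘ (G ∘ φ) =ᵐ F ∘ G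
    have h2 : F ∘ (G ∘ φ) =ᵐ[μ] F ∘ G := h.fun_comp F
    exact (h1.symm.trans h2).trans hFG
  · intro h
    -- pull back along G : ψ ∘ F ∘ G =ᵐ[μ] F ∘ G
    have h1 : (ψ ∘ F) ∘ G =ᵐ[μ] F ∘ G := by
      apply ae_eq_comp hG.aemeasurable
      rw [hGmap]; exact h
    -- ψ ∘ (F ∘ G) =ᵐ ψ ∘ id = ψ
    have h2 : ψ ∘ (F ∘ G) =ᵐ[μ] ψ := hFG.fun_comp ψ
    have hψid : ψ =ᵐ[μ] id := h2.symm.trans (h1.trans hFG)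
    have hφid : φ ∘ ψ =ᵐ[μ] φ := hψid.fun_comp φ
    -- φ =ᵐ id via: φ∘ψ =ᵐ id and φ∘ψ =ᵐ φ gives φ =ᵐ id ... need care
    -- ψ =ᵐ id pulled back along φ gives ψ∘φ =ᵐ φ, and ψ∘φ =ᵐ id, so φ =ᵐ id
    have h3 : ψ ∘ φ =ᵐ[μ] id ∘ φ := by
      apply ae_eq_comp hφ.aemeasurable
      rw [hφmap]; exact hψid
    exact hφne ((h3.symm.trans hψφ))
end

section
/- Let (X, μ) and (Y, ν) be probability spaces and let (G, F) and (G', F') be two exact CycleGAN solutions, where G, G' : X → Y and F, F' : Y → X. Define φ := F ∘ G' : X → X and ψ := F' ∘ G : X → X. Then φ_*μ = μ, ψ ∘ φ = id μ-almost everywhere, φ ∘ ψ = id μ-almost everywhere (so φ is an automorphism of (X, μ)), and moreover G ∘ φ = G' μ-almost everywhere and ψ ∘ F = F' ν-almost everywhere. -/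
open MeasureTheory

/-- The CycleGAN kernel as a principal homogeneous space: any two exact solutions
`(G, F)` and `(G', F')` differ by the probability space automorphism `φ = F ∘ G'`
(with essential inverse `ψ = F' ∘ G`). -/
theorem cycleGAN_kernel_principal_homogeneous
    {X Y : Type*} [MeasurableSpace X] [MeasurableSpace Y]
    (μ : Measure X) (ν : Measure Y)
    [IsProbabilityMeasure μ] [IsProbabilityMeasure ν]
    (G G' : X → Y) (F F' : Y → X)
    (hG : Measurable G) (hF : Measurable F)
    (hG' : Measurable G') (hF' : Measurable F')
    (hGmap : μ.map G = ν) (hFmap : ν.map F = μ)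
    (hFG : F ∘ G =ᵐ[μ] id) (hGF : G ∘ F =ᵐ[ν] id)
    (hG'map : μ.map G' = ν) (hF'map : ν.map F' = μ)
    (hF'G' : F' ∘ G' =ᵐ[μ] id) (hG'F' : G' ∘ F' =ᵐ[ν] id) :
    μ.map (F ∘ G') = μ ∧
      (F' ∘ G) ∘ (F ∘ G') =ᵐ[μ] id ∧ (F ∘ G') ∘ (F' ∘ G) =ᵐ[μ] id ∧
      G ∘ (F ∘ G') =ᵐ[μ] G' ∧ (F' ∘ G) ∘ F =ᵐ[ν] F' := by
  -- G ∘ (F ∘ G') =ᵐ[μ] G'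
  have h1 : G ∘ (F ∘ G') =ᵐ[μ] G' := by
    have := ae_eq_comp (g := G ∘ F) (g' := id) hG'.aemeasurable (hG'map ▸ hGF)
    simpa [Function.comp, Function.comp_assoc] using this
  -- (G' ∘ F') ∘ G =ᵐ[μ] G
  have h2 : (G' ∘ F') ∘ G =ᵐ[μ] G := by
    have := ae_eq_comp (g := G' ∘ F') (g' := id) hG.aemeasurable (hGmap ▸ hG'F')
    simpa [Function.comp] using this
  refine ⟨?_, ?_, ?_, h1, ?_⟩
  · rw [← Measure.map_map hF hG', hG'map, hFmap]
  · calc (F' ∘ G) ∘ (F ∘ G') = F' ∘ (G ∘ (F ∘ G')) := rfl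
      _ =ᵐ[μ] F' ∘ G' := h1.fun_comp F'
      _ =ᵐ[μ] id := hF'G'
  · calc (F ∘ G') ∘ (F' ∘ G) = F ∘ ((G' ∘ F') ∘ G) := rfl
      _ =ᵐ[μ] F ∘ G := h2.fun_comp F
      _ =ᵐ[μ] id := hFG
  · calc (F' ∘ G) ∘ F = F' ∘ (G ∘ F) := rfl
      _ =ᵐ[ν] F' ∘ id := hGF.fun_comp F'
      _ = F' := rfl
end

section
/- Let (X, μ) and (Y, ν) be probability spaces and let (G, F) and (G', F') be two exact CycleGAN solutions, where G, G' : X → Y and F, F' : Y → X. If φ' : X → X is any measurable map with φ'_*μ = μ and G ∘ φ' = G' μ-almost everywhere, then φ' = F ∘ G' μ-almost everywhere. In particular, the automorphism connecting two exact solutions is unique up to μ-almost everywhere equality. -/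
open MeasureTheory

/-- Uniqueness of the connecting automorphism: if a measure-preserving map `φ'`
sends the exact solution `(G, F)` to `(G', F')` (in the sense `G ∘ φ' = G'` a.e.),
then `φ'` coincides a.e. with `F ∘ G'`. -/
theorem cycleGAN_connecting_automorphism_unique
    {X Y : Type*} [MeasurableSpace X] [MeasurableSpace Y]
    (μ : Measure X) (ν : Measure Y)
    [IsProbabilityMeasure μ] [IsProbabilityMeasure ν]
    (G G' : X → Y) (F F' : Y → X)
    (hG : Measurable G) (hF : Measurable F)
    (hG' : Measurable G') (hF' : Measurable F')
    (hGmap : μ.map G = ν) (hFmap : ν.map F = μ)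
    (hFG : F ∘ G =ᵐ[μ] id) (hGF : G ∘ F =ᵐ[ν] id)
    (hG'map : μ.map G' = ν) (hF'map : ν.map F' = μ)
    (hF'G' : F' ∘ G' =ᵐ[μ] id) (hG'F' : G' ∘ F' =ᵐ[ν] id)
    (φ' : X → X) (hφ' : Measurable φ') (hφ'map : μ.map φ' = μ)
    (hφ'G : G ∘ φ' =ᵐ[μ] G') :
    φ' =ᵐ[μ] F ∘ G' := by
  have h1 : (F ∘ G) ∘ φ' =ᵐ[μ] id ∘ φ' := by
    apply ae_eq_comp hφ'.aemeasurable
    rw [hφ'map]; exact hFG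
  have h2 : F ∘ G' =ᵐ[μ] F ∘ (G ∘ φ') := hφ'G.mono fun x hx => congrArg F hx.symm
  calc φ' =ᵐ[μ] (F ∘ G) ∘ φ' := h1.symm
    _ =ᵐ[μ] F ∘ G' := h2.symm
end

section
/- Let X and Y be measurable spaces, μ a probability measure on X, ν a probability measure on Y, F : Y → X a measurable map with F_*ν absolutely continuous with respect to μ, and φ : X → X a bijective measurable map with measurable inverse φ⁻¹ such that φ_*μ = μ. Then (φ⁻¹ ∘ F)_*ν is absolutely continuous with respect to μ, and for every measurable function f : ℝ≥0∞ → ℝ≥0∞ one has ∫⁻ f( d((φ⁻¹ ∘ F)_*ν)/dμ (x) ) dμ(x) = ∫⁻ f( d(F_*ν)/dμ (x) ) dμ(x); that is, the f-divergence term of the CycleGAN loss is invariant under composing F with the inverse of a measure-preserving bijection. -/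
open MeasureTheory ENNReal

/-- The `f`-divergence term of the CycleGAN loss is invariant under composing `F`
with the inverse of a measure-preserving bijection `φ`. -/
theorem fDivergence_term_invariant
    {X Y : Type*} [MeasurableSpace X] [MeasurableSpace Y]
    (μ : Measure X) (ν : Measure Y)
    [IsProbabilityMeasure μ] [IsProbabilityMeasure ν]
    (F : Y → X) (hF : Measurable F) (habs : ν.map F ≪ μ)
    (φ φinv : X → X) (hφ : Measurable φ) (hφinv : Measurable φinv)
    (hbij : Function.Bijective φ)
    (hleft : Function.LeftInverse φinv φ) (hright : Function.RightInverse φinv φ)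
    (hφmap : μ.map φ = μ) :
    ν.map (φinv ∘ F) ≪ μ ∧
      ∀ f : ℝ≥0∞ → ℝ≥0∞, Measurable f →
        ∫⁻ x, f ((ν.map (φinv ∘ F)).rnDeriv μ x) ∂μ
          = ∫⁻ x, f ((ν.map F).rnDeriv μ x) ∂μ := by
  -- the measurable equivalence with forward map φinv
  let e : X ≃ᵐ X :=
    { toFun := φinv
      invFun := φ
      left_inv := hright
      right_inv := hleft
      measurable_toFun := hφinv
      measurable_invFun := hφ }
  have hemb : MeasurableEmbedding φinv := e.measurableEmbedding
  have hmapinv : μ.map φinv = μ := by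
    conv_lhs => rw [← hφmap]
    rw [Measure.map_map hφinv hφ]
    have : φinv ∘ φ = id := funext hleft
    rw [this, Measure.map_id]
  have hcomp : ν.map (φinv ∘ F) = (ν.map F).map φinv :=
    (Measure.map_map hφinv hF).symm
  have habs' : ν.map (φinv ∘ F) ≪ μ := by
    rw [hcomp, ← hmapinv]
    exact habs.map hφinv
  refine ⟨habs', fun f hf => ?_⟩
  have : IsProbabilityMeasure (ν.map F) := Measure.isProbabilityMeasure_map hF.aemeasurable
  have hrn := hemb.rnDeriv_map (ν.map F) μ
  rw [hmapinv] at hrn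
  rw [hcomp]
  calc ∫⁻ x, f (((ν.map F).map φinv).rnDeriv μ x) ∂μ
      = ∫⁻ x, f (((ν.map F).map φinv).rnDeriv μ x) ∂(μ.map φinv) := by rw [hmapinv]
    _ = ∫⁻ x, f (((ν.map F).map φinv).rnDeriv μ (φinv x)) ∂μ :=
        lintegral_map (hf.comp (Measure.measurable_rnDeriv _ _)) hφinv
    _ = ∫⁻ x, f ((ν.map F).rnDeriv μ x) ∂μ := by
        refine lintegral_congr_ae ?_
        filter_upwards [hrn] with x hx using by rw [hx]
end

section
/- Perturbation bound for the extended CycleGAN loss: Let μ, ν be probability measures on ℝⁿ, let f : ℝ≥0∞ → ℝ≥0∞ be measurable, and let α_cyc, α_id ∈ ℝ≥0∞. For measurable G, F : ℝⁿ → ℝⁿ define L_ext(G, F) := ∫⁻ f(d(G_*μ)/dν) dν + ∫⁻ f(d(F_*ν)/dμ) dμ + α_cyc · ( ∫⁻ ‖F(G(x)) − x‖ dμ(x) + ∫⁻ ‖G(F(y)) − y‖ dν(y) ) + α_id · ( ∫⁻ ‖F(y) − y‖ dν(y) + ∫⁻ ‖G(x) − x‖ dμ(x) ). Let φ : ℝⁿ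 → ℝⁿ be a bijective measurable map with φ_*μ = μ whose inverse φ⁻¹ is measurable and C-Lipschitz for some C > 0, and assume F_*ν is absolutely continuous with respect to μ. Then L_ext(G ∘ φ, φ⁻¹ ∘ F) ≤ max(C, 1) · L_ext(G, F) + α_id · ( ∫⁻ ‖φ(x) − x‖ dμ(x) + ∫⁻ ‖φ⁻¹(y) − y‖ dν(y) ). -/
open MeasureTheory ENNReal NNReal

/-- The extended CycleGAN loss of the pair `(G, F)` with respect to the
probability measures `μ`, `ν`, the divergence generator `f`, and the weights
`acyc` (cycle-consistency) and `aid` (identity loss). -/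
noncomputable def extendedCycleGANLoss {n : ℕ}
    (μ ν : Measure (EuclideanSpace ℝ (Fin n)))
    (f : ℝ≥0∞ → ℝ≥0∞) (acyc aid : ℝ≥0∞)
    (G F : EuclideanSpace ℝ (Fin n) → EuclideanSpace ℝ (Fin n)) : ℝ≥0∞ :=
  ∫⁻ y, f ((μ.map G).rnDeriv ν y) ∂ν + ∫⁻ x, f ((ν.map F).rnDeriv μ x) ∂μ
    + acyc * (∫⁻ x, (‖F (G x) - x‖₊ : ℝ≥0∞) ∂μ
        + ∫⁻ y, (‖G (F y) - y‖₊ : ℝ≥0∞) ∂ν)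
    + aid * (∫⁻ y, (‖F y - y‖₊ : ℝ≥0∞) ∂ν
        + ∫⁻ x, (‖G x - x‖₊ : ℝ≥0∞) ∂μ)

/-- Perturbation bound for the extended CycleGAN loss under conjugation by a
measure-preserving bijection `φ` with `C`-Lipschitz inverse. -/
theorem extendedCycleGANLoss_perturbation_bound
    {n : ℕ} (μ ν : Measure (EuclideanSpace ℝ (Fin n)))
    [IsProbabilityMeasure μ] [IsProbabilityMeasure ν]
    (f : ℝ≥0∞ → ℝ≥0∞) (hf : Measurable f)
    (acyc aid : ℝ≥0∞)
    (G F : EuclideanSpace ℝ (Fin n) → EuclideanSpace ℝ (Fin n))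
    (hG : Measurable G) (hF : Measurable F)
    (φ φinv : EuclideanSpace ℝ (Fin n) → EuclideanSpace ℝ (Fin n))
    (hφ : Measurable φ) (hφinv : Measurable φinv)
    (hbij : Function.Bijective φ)
    (hleft : Function.LeftInverse φinv φ) (hright : Function.RightInverse φinv φ)
    (hφmap : μ.map φ = μ)
    (C : ℝ≥0) (hC : 0 < C) (hLip : ∀ a b, ‖φinv a - φinv b‖ ≤ (C : ℝ) * ‖a - b‖)
    (habs : ν.map F ≪ μ) :
    extendedCycleGANLoss μ ν f acyc aid (G ∘ φ) (φinv ∘ F)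
      ≤ ((max C 1 : ℝ≥0) : ℝ≥0∞) * extendedCycleGANLoss μ ν f acyc aid G F
        + aid * (∫⁻ x, (‖φ x - x‖₊ : ℝ≥0∞) ∂μ
            + ∫⁻ y, (‖φinv y - y‖₊ : ℝ≥0∞) ∂ν) := by
  -- Lipschitz bound in `ℝ≥0∞`.
  have hLipE : ∀ a b, (‖φinv a - φinv b‖₊ : ℝ≥0∞) ≤ (C : ℝ≥0∞) * ‖a - b‖₊ := by
    intro a b
    rw [← ENNReal.coe_mul, ENNReal.coe_le_coe, ← NNReal.coe_le_coe]
    push_cast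
    exact hLip a b
  -- Triangle inequality in `ℝ≥0∞`.
  have htri : ∀ a b c : EuclideanSpace ℝ (Fin n),
      (‖a - c‖₊ : ℝ≥0∞) ≤ (‖a - b‖₊ : ℝ≥0∞) + ‖b - c‖₊ := by
    intro a b c
    rw [← ENNReal.coe_add, ENNReal.coe_le_coe]
    have : a - c = (a - b) + (b - c) := by abel
    rw [this]
    exact nnnorm_add_le _ _
  have hμinv : μ.map φinv = μ := by
    conv_lhs => rw [← hφmap]
    rw [Measure.map_map hφinv hφ, hleft.comp_eq_id, Measure.map_id]
  -- `φinv` as a measurable embedding.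
  have hchg : ∀ h : EuclideanSpace ℝ (Fin n) → ℝ≥0∞, Measurable h →
      ∫⁻ x, h (φ x) ∂μ = ∫⁻ x, h x ∂μ := by
    intro h hh
    rw [← lintegral_map hh hφ, hφmap]
  have hemb : MeasurableEmbedding φinv :=
    (MeasurableEquiv.mk ⟨φinv, φ, hright, hleft⟩ hφinv hφ).measurableEmbedding
  have hPF : IsProbabilityMeasure (ν.map F) := Measure.isProbabilityMeasure_map hF.aemeasurable
  -- First divergence term: equality.
  have e1 : μ.map (G ∘ φ) = μ.map G := by
    rw [← Measure.map_map hG hφ, hφmap]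
  -- Second divergence term: equality.
  have e2 : ∫⁻ x, f ((ν.map (φinv ∘ F)).rnDeriv μ x) ∂μ
      = ∫⁻ x, f ((ν.map F).rnDeriv μ x) ∂μ := by
    have hrd := hemb.rnDeriv_map (ν.map F) μ
    rw [hμinv] at hrd
    rw [← Measure.map_map hφinv hF]
    calc ∫⁻ x, f (((ν.map F).map φinv).rnDeriv μ x) ∂μ
        = ∫⁻ x, f (((ν.map F).map φinv).rnDeriv μ x) ∂(μ.map φinv) := by rw [hμinv]
      _ = ∫⁻ x, f (((ν.map F).map φinv).rnDeriv μ (φinv x)) ∂μ :=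
          lintegral_map (hf.comp (Measure.measurable_rnDeriv _ _)) hφinv
      _ = ∫⁻ x, f ((ν.map F).rnDeriv μ x) ∂μ := by
          refine lintegral_congr_ae ?_
          filter_upwards [hrd] with x hx
          rw [hx]
  -- First cycle term.
  have e3 : ∫⁻ x, (‖(φinv ∘ F) ((G ∘ φ) x) - x‖₊ : ℝ≥0∞) ∂μ
      ≤ (C : ℝ≥0∞) * ∫⁻ x, (‖F (G x) - x‖₊ : ℝ≥0∞) ∂μ := by
    calc ∫⁻ x, (‖(φinv ∘ F) ((G ∘ φ) x) - x‖₊ : ℝ≥0∞) ∂μ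
        ≤ ∫⁻ x, (C : ℝ≥0∞) * (‖F (G (φ x)) - φ x‖₊ : ℝ≥0∞) ∂μ := by
          refine lintegral_mono fun x => ?_
          have := hLipE (F (G (φ x))) (φ x)
          rw [hleft x] at this
          exact this
      _ = (C : ℝ≥0∞) * ∫⁻ x, (‖F (G (φ x)) - φ x‖₊ : ℝ≥0∞) ∂μ :=
          lintegral_const_mul _ ((hF.comp (hG.comp hφ)).sub hφ).nnnorm.coe_nnreal_ennreal
      _ = (C : ℝ≥0∞) * ∫⁻ x, (‖F (G x) - x‖₊ : ℝ≥0∞) ∂μ := by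
          congr 1
          exact hchg (fun y => (‖F (G y) - y‖₊ : ℝ≥0∞))
            (by exact ((hF.comp hG).sub measurable_id).nnnorm.coe_nnreal_ennreal)
  -- Second cycle term: equality.
  have e4 : ∫⁻ y, (‖(G ∘ φ) ((φinv ∘ F) y) - y‖₊ : ℝ≥0∞) ∂ν
      = ∫⁻ y, (‖G (F y) - y‖₊ : ℝ≥0∞) ∂ν := by
    refine lintegral_congr fun y => ?_
    simp [Function.comp, hright (F y)]
  -- First identity term.
  have e5 : ∫⁻ y, (‖(φinv ∘ F) y - y‖₊ : ℝ≥0∞) ∂ν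
      ≤ (C : ℝ≥0∞) * ∫⁻ y, (‖F y - y‖₊ : ℝ≥0∞) ∂ν
        + ∫⁻ y, (‖φinv y - y‖₊ : ℝ≥0∞) ∂ν := by
    calc ∫⁻ y, (‖(φinv ∘ F) y - y‖₊ : ℝ≥0∞) ∂ν
        ≤ ∫⁻ y, ((C : ℝ≥0∞) * (‖F y - y‖₊ : ℝ≥0∞) + (‖φinv y - y‖₊ : ℝ≥0∞)) ∂ν := by
          refine lintegral_mono fun y => ?_
          calc (‖φinv (F y) - y‖₊ : ℝ≥0∞)
              ≤ (‖φinv (F y) - φinv y‖₊ : ℝ≥0∞) + ‖φinv y - y‖₊ := htri _ _ _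
            _ ≤ (C : ℝ≥0∞) * (‖F y - y‖₊ : ℝ≥0∞) + ‖φinv y - y‖₊ :=
                add_le_add (hLipE _ _) le_rfl
      _ = (C : ℝ≥0∞) * ∫⁻ y, (‖F y - y‖₊ : ℝ≥0∞) ∂ν
            + ∫⁻ y, (‖φinv y - y‖₊ : ℝ≥0∞) ∂ν := by
          rw [lintegral_add_left
              (f := fun y => (C : ℝ≥0∞) * (‖F y - y‖₊ : ℝ≥0∞))
              (by exact measurable_const.mul (hF.sub measurable_id).nnnorm.coe_nnreal_ennreal)]
          congr 1
          exact lintegral_const_mul _ (by exact (hF.sub measurable_id).nnnorm.coe_nnreal_ennreal)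
  -- Second identity term.
  have e6 : ∫⁻ x, (‖(G ∘ φ) x - x‖₊ : ℝ≥0∞) ∂μ
      ≤ ∫⁻ x, (‖G x - x‖₊ : ℝ≥0∞) ∂μ + ∫⁻ x, (‖φ x - x‖₊ : ℝ≥0∞) ∂μ := by
    calc ∫⁻ x, (‖(G ∘ φ) x - x‖₊ : ℝ≥0∞) ∂μ
        ≤ ∫⁻ x, ((‖G (φ x) - φ x‖₊ : ℝ≥0∞) + (‖φ x - x‖₊ : ℝ≥0∞)) ∂μ :=
          lintegral_mono fun x => htri _ _ _
      _ = ∫⁻ x, (‖G (φ x) - φ x‖₊ : ℝ≥0∞) ∂μ + ∫⁻ x, (‖φ x - x‖₊ : ℝ≥0∞) ∂μ :=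
          lintegral_add_left ((hG.comp hφ).sub hφ).nnnorm.coe_nnreal_ennreal _
      _ = ∫⁻ x, (‖G x - x‖₊ : ℝ≥0∞) ∂μ + ∫⁻ x, (‖φ x - x‖₊ : ℝ≥0∞) ∂μ := by
          congr 1
          exact hchg (fun y => (‖G y - y‖₊ : ℝ≥0∞))
            (by exact (hG.sub measurable_id).nnnorm.coe_nnreal_ennreal)
  -- Put everything together.
  set D1 := ∫⁻ y, f ((μ.map G).rnDeriv ν y) ∂ν with hD1
  set D2 := ∫⁻ x, f ((ν.map F).rnDeriv μ x) ∂μ with hD2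
  set A := ∫⁻ x, (‖F (G x) - x‖₊ : ℝ≥0∞) ∂μ with hA
  set B := ∫⁻ y, (‖G (F y) - y‖₊ : ℝ≥0∞) ∂ν with hB
  set I1 := ∫⁻ y, (‖F y - y‖₊ : ℝ≥0∞) ∂ν with hI1
  set I2 := ∫⁻ x, (‖G x - x‖₊ : ℝ≥0∞) ∂μ with hI2
  set P1 := ∫⁻ x, (‖φ x - x‖₊ : ℝ≥0∞) ∂μ with hP1
  set P2 := ∫⁻ y, (‖φinv y - y‖₊ : ℝ≥0∞) ∂ν with hP2
  set M : ℝ≥0∞ := ((max C 1 : ℝ≥0) : ℝ≥0∞) with hM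
  have hM1 : (1 : ℝ≥0∞) ≤ M := by
    rw [hM]
    exact_mod_cast le_max_right C 1
  have hMC : (C : ℝ≥0∞) ≤ M := by
    rw [hM]
    exact_mod_cast le_max_left C 1
  rw [extendedCycleGANLoss, extendedCycleGANLoss, e1, e2, e4]
  rw [← hD1, ← hD2, ← hA, ← hB, ← hI1, ← hI2]
  calc D1 + D2 + acyc * (∫⁻ x, (‖(φinv ∘ F) ((G ∘ φ) x) - x‖₊ : ℝ≥0∞) ∂μ + B)
        + aid * (∫⁻ y, (‖(φinv ∘ F) y - y‖₊ : ℝ≥0∞) ∂ν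
          + ∫⁻ x, (‖(G ∘ φ) x - x‖₊ : ℝ≥0∞) ∂μ)
      ≤ D1 + D2 + acyc * ((C : ℝ≥0∞) * A + B)
        + aid * (((C : ℝ≥0∞) * I1 + P2) + (I2 + P1)) := by
        gcongr
    _ = (D1 + D2 + acyc * ((C : ℝ≥0∞) * A + B) + aid * ((C : ℝ≥0∞) * I1 + I2))
        + aid * (P1 + P2) := by ring
    _ ≤ (M * D1 + M * D2 + acyc * (M * A + M * B) + aid * (M * I1 + M * I2))
        + aid * (P1 + P2) := by
        gcongr <;> first
          | exact le_mul_of_one_le_left (by positivity) hM1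
          | exact hMC
    _ = M * (D1 + D2 + acyc * (A + B) + aid * (I1 + I2)) + aid * (P1 + P2) := by
        ring
end

section
/- Existence of nontrivial automorphisms in the non-purely-atomic case: Let X be a standard Borel space and μ a probability measure on X which is not purely atomic, in the sense that ∑' (x : X), μ {x} < 1. Then there exist measurable maps φ, ψ : X → X with φ_*μ = μ, ψ ∘ φ = id μ-almost everywhere, φ ∘ ψ = id μ-almost everywhere, and such that φ is not μ-almost everywhere equal to the identity map; i.e. (X, μ) admits a nontrivial probability space automorphism. -/
open MeasureTheory Set Filter ProbabilityTheory
open scoped ENNReal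

namespace NTAuto

variable (ν : Measure ℝ) [IsProbabilityMeasure ν] [NullSingletonClass ν]

/-- The (right-continuous generalized) quantile function. -/
noncomputable def Q (t : ℝ) : ℝ := sSup {y | cdf ν y ≤ t}

lemma leftLim_cdf (x : ℝ) : Function.leftLim (cdf ν) x = cdf ν x := by
  have h := (cdf ν).measure_singleton x
  rw [measure_cdf, measure_singleton] at h
  have h1 : cdf ν x - Function.leftLim (cdf ν) x ≤ 0 := by
    by_contra hc
    push_neg at hc
    rw [eq_comm, ENNReal.ofReal_eq_zero] at h
    linarith
  have h2 : Function.leftLim (cdf ν) x ≤ cdf ν x :=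
    (monotone_cdf ν).leftLim_le le_rfl
  linarith

lemma bddAbove_S {t : ℝ} (ht : t < 1) : BddAbove {y | cdf ν y ≤ t} := by
  have : ∀ᶠ y in atTop, t < cdf ν y :=
    (tendsto_cdf_atTop ν).eventually (eventually_gt_nhds ht)
  obtain ⟨Y, hY⟩ := this.exists
  exact ⟨Y, fun y hy => by
    by_contra hc
    push_neg at hc
    exact absurd (le_trans (monotone_cdf ν hc.le) hy) (not_le.2 hY)⟩

lemma nonempty_S {t : ℝ} (ht : 0 < t) : {y | cdf ν y ≤ t}.Nonempty := by
  have : ∀ᶠ y in atBot, cdf ν y < t :=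
    (tendsto_cdf_atBot ν).eventually (eventually_lt_nhds ht)
  obtain ⟨Y, hY⟩ := this.exists
  exact ⟨Y, hY.le⟩

lemma cdf_Q {t : ℝ} (hne : {y | cdf ν y ≤ t}.Nonempty) (ht : t < 1) :
    cdf ν (Q ν t) = t := by
  have hbdd := bddAbove_S ν ht
  have hle : cdf ν (Q ν t) ≤ t := by
    rw [← leftLim_cdf ν, (monotone_cdf ν).leftLim_eq_sSup]
    · refine csSup_le (by simpa using Nonempty.image _ (nonempty_Iio (a := Q ν t))) ?_
      rintro v ⟨y, hy, rfl⟩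
      obtain ⟨z, hz, hyz⟩ := exists_lt_of_lt_csSup hne hy
      exact le_trans (monotone_cdf ν hyz.le) hz
  have hge : t ≤ cdf ν (Q ν t) := by
    rw [← (cdf ν).rightLim_eq, (monotone_cdf ν).rightLim_eq_sInf]
    · refine le_csInf (by simpa using Nonempty.image _ (nonempty_Ioi (a := Q ν t))) ?_
      rintro v ⟨y, hy, rfl⟩
      by_contra hc
      push_neg at hc
      exact absurd (le_csSup hbdd hc.le) (not_le.2 hy)
  linarith

lemma S_eq {t : ℝ} (hne : {y | cdf ν y ≤ t}.Nonempty) (ht : t < 1) :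
    {y | cdf ν y ≤ t} = Iic (Q ν t) := by
  ext y
  constructor
  · intro hy
    exact le_csSup (bddAbove_S ν ht) hy
  · intro hy
    exact le_trans (monotone_cdf ν hy) (cdf_Q ν hne ht).le

lemma map_cdf : ν.map (cdf ν) = volume.restrict (Icc (0:ℝ) 1) := by
  have hmeas : Measurable (cdf ν) := (cdf ν).mono.measurable
  refine Measure.ext_of_Iic _ _ (fun t => ?_)
  rw [Measure.map_apply hmeas measurableSet_Iic, Measure.restrict_apply measurableSet_Iic]
  rcases lt_or_ge t 0 with ht | ht
  · have h1 : (cdf ν) ⁻¹' Iic t = ∅ := by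
      ext y; simp only [mem_preimage, mem_Iic, mem_empty_iff_false, iff_false, not_le]
      exact lt_of_lt_of_le ht (cdf_nonneg ν y)
    have h2 : Iic t ∩ Icc (0:ℝ) 1 = ∅ := by
      ext y; simp only [mem_inter_iff, mem_Iic, mem_Icc, mem_empty_iff_false, iff_false]
      rintro ⟨h, h0, -⟩; linarith
    rw [h1, h2]
    simp
  rcases lt_or_ge t 1 with ht1 | ht1
  · have h2 : Iic t ∩ Icc (0:ℝ) 1 = Icc 0 t := by
      ext y; simp only [mem_inter_iff, mem_Iic, mem_Icc]
      constructor
      · rintro ⟨h, h0, -⟩; exact ⟨h0, h⟩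
      · rintro ⟨h0, h⟩; exact ⟨h, h0, by linarith⟩
    rw [h2, Real.volume_Icc]
    rcases eq_empty_or_nonempty {y | cdf ν y ≤ t} with he | hne
    · have h1 : (cdf ν) ⁻¹' Iic t = ∅ := he
      rw [h1]
      have : t = 0 := by
        refine le_antisymm ?_ ht
        by_contra hc
        push_neg at hc
        exact absurd (nonempty_S ν hc) (by rw [he]; exact not_nonempty_empty)
      simp [this]
    · have h1 : (cdf ν) ⁻¹' Iic t = Iic (Q ν t) := S_eq ν hne ht1
      rw [h1, ← ofReal_cdf ν (Q ν t), cdf_Q ν hne ht1, sub_zero]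
  · have h1 : (cdf ν) ⁻¹' Iic t = univ := by
      ext y; simp only [mem_preimage, mem_Iic, mem_univ, iff_true]
      exact le_trans (cdf_le_one ν y) ht1
    have h2 : Iic t ∩ Icc (0:ℝ) 1 = Icc 0 1 := by
      refine inter_eq_self_of_subset_right (fun y hy => ?_)
      exact le_trans hy.2 ht1
    rw [h1, h2, measure_univ, Real.volume_Icc]
    norm_num


lemma measurable_Q : Measurable (Q ν) := by
  set good : Set ℝ := {t | ({y | cdf ν y ≤ t}).Nonempty} ∩ {t | BddAbove {y | cdf ν y ≤ t}}
    with hgood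
  have hsub : ∀ {s t : ℝ}, s ≤ t → {y | cdf ν y ≤ s} ⊆ {y | cdf ν y ≤ t} :=
    fun {s t} hst y hy => le_trans hy hst
  have hg1 : ∀ {s t : ℝ}, s ≤ t → s ∈ good → t ∈ good → Q ν s ≤ Q ν t := by
    intro s t hst hs ht
    exact csSup_le_csSup ht.2 hs.1 (hsub hst)
  have hgoodOC : good.OrdConnected := by
    constructor
    rintro s ⟨hs1, hs2⟩ t ⟨ht1, ht2⟩ u ⟨hus, hut⟩
    exact ⟨hs1.mono (hsub hus), BddAbove.mono (hsub hut) ht2⟩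
  have hQ0 : ∀ {t : ℝ}, t ∉ good → Q ν t = 0 := by
    intro t ht
    rw [hgood, mem_inter_iff, not_and_or] at ht
    rcases ht with ht | ht
    · simp only [mem_setOf_eq, Set.not_nonempty_iff_eq_empty] at ht
      rw [Q, ht, Real.sSup_empty]
    · simp only [mem_setOf_eq] at ht
      exact Real.sSup_of_not_bddAbove ht
  refine measurable_of_Iic (fun a => ?_)
  have hset : Q ν ⁻¹' Iic a =
      ({t | Q ν t ≤ a} ∩ good) ∪ (goodᶜ ∩ {t | (0:ℝ) ≤ a}) := by
    ext t
    simp only [mem_preimage, mem_Iic, mem_union, mem_inter_iff, mem_compl_iff, mem_setOf_eq]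
    by_cases htg : t ∈ good
    · simp [htg]
    · simp [htg, hQ0 htg]
  have hD : MeasurableSet ({t | Q ν t ≤ a} ∩ good) := by
    refine Set.OrdConnected.measurableSet ?_
    constructor
    rintro s ⟨hs1, hs2⟩ t ⟨ht1, ht2⟩ u ⟨hus, hut⟩
    have hug : u ∈ good := hgoodOC.out hs2 ht2 ⟨hus, hut⟩
    exact ⟨le_trans (hg1 hut hug ht2) ht1, hug⟩
  have hgoodM : MeasurableSet good := by
    refine Set.OrdConnected.measurableSet hgoodOC
  rw [hset]
  refine MeasurableSet.union hD (MeasurableSet.inter hgoodM.compl ?_)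
  by_cases h : (0:ℝ) ≤ a
  · simp [h]
  · simp [h]

/-- The candidate nontrivial involution. -/
noncomputable def invol : ℝ → ℝ := fun x => Q ν (1 - cdf ν x)

lemma measurable_invol : Measurable (invol ν) :=
  (measurable_Q ν).comp ((measurable_const.sub (cdf ν).mono.measurable))

lemma null_cdf_eq (c : ℝ) : ν {x | cdf ν x = c} = 0 := by
  have : {x | cdf ν x = c} = (cdf ν) ⁻¹' {c} := rfl
  rw [this, ← Measure.map_apply (cdf ν).mono.measurable (measurableSet_singleton c),
    map_cdf, Measure.restrict_apply (measurableSet_singleton c)]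
  exact measure_mono_null Set.inter_subset_left (measure_singleton c)

lemma ae_Q_cdf : ∀ᵐ x ∂ν, Q ν (cdf ν x) = x := by
  rw [ae_iff]
  have hnull : ν ({x | cdf ν x = 0} ∪ {x | cdf ν x = 1} ∪ ⋃ q : ℚ, {x | cdf ν x = cdf ν q}) = 0 := by
    refine measure_union_null (measure_union_null (null_cdf_eq ν 0) (null_cdf_eq ν 1)) ?_
    exact measure_iUnion_null (fun q => null_cdf_eq ν _)
  refine measure_mono_null (fun x hx => ?_) hnull
  · simp only [mem_setOf_eq] at hx
    simp only [mem_union, mem_iUnion, mem_setOf_eq]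
    by_cases h0 : cdf ν x = 0
    · exact Or.inl (Or.inl h0)
    by_cases h1 : cdf ν x = 1
    · exact Or.inl (Or.inr h1)
    refine Or.inr ?_
    have hx1 : cdf ν x < 1 := lt_of_le_of_ne (cdf_le_one ν x) h1
    have hne : {y | cdf ν y ≤ cdf ν x}.Nonempty := ⟨x, show cdf ν x ≤ cdf ν x from le_rfl⟩
    have hxle : x ≤ Q ν (cdf ν x) := le_csSup (bddAbove_S ν hx1) (mem_setOf.mpr le_rfl)
    have hxlt : x < Q ν (cdf ν x) := lt_of_le_of_ne hxle (fun h => hx h.symm)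
    obtain ⟨q, hq1, hq2⟩ := exists_rat_btwn hxlt
    refine ⟨q, le_antisymm (monotone_cdf ν hq1.le) ?_⟩
    calc cdf ν q ≤ cdf ν (Q ν (cdf ν x)) := monotone_cdf ν hq2.le
    _ = cdf ν x := cdf_Q ν hne hx1

lemma cdf_invol {x : ℝ} (h0 : 0 < cdf ν x) (h1 : cdf ν x < 1) :
    cdf ν (invol ν x) = 1 - cdf ν x := by
  refine cdf_Q ν (nonempty_S ν (by linarith)) (by linarith)

lemma ae_invol_invol : ∀ᵐ x ∂ν, invol ν (invol ν x) = x := by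
  have h0 : ∀ᵐ x ∂ν, cdf ν x ≠ 0 := by
    rw [ae_iff]; simpa using null_cdf_eq ν 0
  have h1 : ∀ᵐ x ∂ν, cdf ν x ≠ 1 := by
    rw [ae_iff]; simpa using null_cdf_eq ν 1
  filter_upwards [h0, h1, ae_Q_cdf ν] with x h0 h1 hQ
  have hx0 : 0 < cdf ν x := lt_of_le_of_ne (cdf_nonneg ν x) (Ne.symm h0)
  have hx1 : cdf ν x < 1 := lt_of_le_of_ne (cdf_le_one ν x) h1
  have hc : cdf ν (invol ν x) = 1 - cdf ν x := cdf_invol ν hx0 hx1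
  show Q ν (1 - cdf ν (invol ν x)) = x
  rw [hc, sub_sub_cancel]
  exact hQ

lemma map_invol : ν.map (invol ν) = ν := by
  have hr : Measurable (fun t : ℝ => 1 - t) := measurable_const.sub measurable_id
  have hcm : Measurable (cdf ν) := (cdf ν).mono.measurable
  have hQm := measurable_Q ν
  have hmap_r : (volume.restrict (Icc (0:ℝ) 1)).map (fun t => 1 - t)
      = volume.restrict (Icc (0:ℝ) 1) := by
    refine Measure.ext_of_Iic _ _ (fun a => ?_)
    rw [Measure.map_apply hr measurableSet_Iic, Measure.restrict_apply measurableSet_Iic,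
      Measure.restrict_apply (hr measurableSet_Iic)]
    have h1 : (fun t : ℝ => 1 - t) ⁻¹' Iic a ∩ Icc 0 1 = Icc (max (1 - a) 0) 1 := by
      ext y
      simp only [mem_inter_iff, mem_preimage, mem_Iic, mem_Icc, le_max_iff, max_le_iff]
      constructor
      · rintro ⟨h, h0, hy1⟩; exact ⟨⟨by linarith, h0⟩, hy1⟩
      · rintro ⟨⟨ha, h0⟩, hy1⟩; exact ⟨by linarith, h0, hy1⟩
    have h2 : Iic a ∩ Icc (0:ℝ) 1 = Icc 0 (min a 1) := by
      ext y
      simp only [mem_inter_iff, mem_Iic, mem_Icc, le_min_iff]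
      constructor
      · rintro ⟨h, h0, hy1⟩; exact ⟨h0, h, hy1⟩
      · rintro ⟨h0, h, hy1⟩; exact ⟨h, h0, hy1⟩
    rw [h1, h2, Real.volume_Icc, Real.volume_Icc]
    congr 1
    rcases le_total a 1 with h | h
    · rcases le_total a 0 with h' | h'
      · rw [max_eq_left (by linarith), min_eq_left h]; ring
      · rw [max_eq_left (by linarith), min_eq_left h]; ring
    · rw [max_eq_right (by linarith), min_eq_right h]
  have key : ν.map (invol ν) = (volume.restrict (Icc (0:ℝ) 1)).map (Q ν) := by
    have e1 : ν.map (invol ν) = ((ν.map (cdf ν)).map (fun t : ℝ => 1 - t)).map (Q ν) := by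
      rw [Measure.map_map hr hcm, Measure.map_map hQm (hr.comp hcm)]
      rfl
    rw [e1, map_cdf, hmap_r]
  have key2 : (volume.restrict (Icc (0:ℝ) 1)).map (Q ν) = ν := by
    have h1 : ν.map (fun x => Q ν (cdf ν x)) = ν.map id :=
      Measure.map_congr (ae_Q_cdf ν)
    rw [← map_cdf ν, Measure.map_map hQm hcm]
    calc ν.map ((Q ν) ∘ (cdf ν)) = ν.map (fun x => Q ν (cdf ν x)) := rfl
    _ = ν.map id := h1
    _ = ν := Measure.map_id
  rw [key, key2]

lemma null_invol_eq : ν {x | invol ν x = x} = 0 := by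
  have hnull : ν ({x | cdf ν x = 0} ∪ {x | cdf ν x = 1} ∪ {x | cdf ν x = 1/2}) = 0 :=
    measure_union_null (measure_union_null (null_cdf_eq ν 0) (null_cdf_eq ν 1))
      (null_cdf_eq ν _)
  refine measure_mono_null (fun x hx => ?_) hnull
  · simp only [mem_setOf_eq] at hx
    simp only [mem_union, mem_setOf_eq]
    by_cases h0 : cdf ν x = 0
    · exact Or.inl (Or.inl h0)
    by_cases h1 : cdf ν x = 1
    · exact Or.inl (Or.inr h1)
    have hx0 : 0 < cdf ν x := lt_of_le_of_ne (cdf_nonneg ν x) (Ne.symm h0)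
    have hx1 : cdf ν x < 1 := lt_of_le_of_ne (cdf_le_one ν x) h1
    have := cdf_invol ν hx0 hx1
    rw [hx] at this
    refine Or.inr (show cdf ν x = 1/2 by linarith)


lemma real_case (m : Measure ℝ) [IsProbabilityMeasure m] (K : Set ℝ) (hK : K.Countable)
    (hcont : ∀ y ∉ K, m {y} = 0) (hp : m Kᶜ ≠ 0) :
    ∃ σ : ℝ → ℝ, Measurable σ ∧ m.map σ = m ∧ (∀ᵐ y ∂m, σ (σ y) = y) ∧
      m {y | σ y ≠ y} ≠ 0 := by
  classical
  have hKm : MeasurableSet K := hK.measurableSet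
  set p : ℝ≥0∞ := m Kᶜ with hpdef
  have hptop : p ≠ ∞ := (lt_of_le_of_lt (measure_mono (subset_univ _))
    (by rw [measure_univ]; exact ENNReal.one_lt_top)).ne
  set νraw : Measure ℝ := m.restrict Kᶜ with hνraw
  set ν : Measure ℝ := p⁻¹ • νraw with hν
  have hνrawT : ∀ T : Set ℝ, νraw T = m (T ∩ Kᶜ) := fun T =>
    Measure.restrict_apply' hKm.compl
  haveI : IsProbabilityMeasure ν := by
    constructor
    rw [hν, Measure.smul_apply, smul_eq_mul, hνrawT, univ_inter, ← hpdef]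
    exact ENNReal.inv_mul_cancel hp hptop
  haveI : NullSingletonClass ν := by
    constructor
    intro y
    rw [hν, Measure.smul_apply, smul_eq_mul, hνrawT]
    by_cases hy : y ∈ K
    · have : {y} ∩ Kᶜ = (∅ : Set ℝ) := by
        ext z; simp only [mem_inter_iff, mem_singleton_iff, mem_compl_iff,
          mem_empty_iff_false, iff_false, not_and]
        rintro rfl; simpa using hy
      rw [this]; simp
    · have : {y} ∩ Kᶜ ⊆ {y} := inter_subset_left
      rw [le_antisymm (le_trans (measure_mono this) (hcont y hy).le) zero_le]
      simp
  have hνrawν : νraw = p • ν := by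
    rw [hν, smul_smul, ENNReal.mul_inv_cancel hp hptop, one_smul]
  set σ : ℝ → ℝ := K.piecewise id (invol ν) with hσdef
  have hσm : Measurable σ := Measurable.piecewise hKm measurable_id (measurable_invol ν)
  have hσK : ∀ y ∈ K, σ y = y := fun y hy => by
    simp [hσdef, Set.piecewise_eq_of_mem _ _ _ hy]
  have hσnK : ∀ y ∉ K, σ y = invol ν y := fun y hy => by
    simp [hσdef, Set.piecewise_eq_of_notMem _ _ _ hy]
  have hνmap : ∀ T : Set ℝ, MeasurableSet T → ν (invol ν ⁻¹' T) = ν T := by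
    intro T hT
    rw [← Measure.map_apply (measurable_invol ν) hT, map_invol]
  refine ⟨σ, hσm, ?_, ?_, ?_⟩
  · -- m.map σ = m
    refine Measure.ext (fun T hT => ?_)
    rw [Measure.map_apply hσm hT]
    have split : ∀ U : Set ℝ, m (U ∩ K) + m (U \ K) = m U := fun U =>
      measure_inter_add_diff U hKm
    have h1 : σ ⁻¹' T ∩ K = T ∩ K := by
      ext y
      simp only [mem_inter_iff, mem_preimage]
      constructor
      · rintro ⟨hy, hyK⟩; rw [hσK y hyK] at hy; exact ⟨hy, hyK⟩
      · rintro ⟨hy, hyK⟩; rw [hσK y hyK]; exact ⟨hy, hyK⟩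
    have h2 : σ ⁻¹' T \ K = invol ν ⁻¹' T \ K := by
      ext y
      simp only [mem_diff, mem_preimage]
      constructor
      · rintro ⟨hy, hyK⟩; rw [hσnK y hyK] at hy; exact ⟨hy, hyK⟩
      · rintro ⟨hy, hyK⟩; rw [hσnK y hyK]; exact ⟨hy, hyK⟩
    have h3 : ∀ S : Set ℝ, MeasurableSet S → m (S \ K) = p * ν S := by
      intro S hS
      rw [diff_eq, ← hνrawT, hνrawν, Measure.smul_apply, smul_eq_mul]
    calc m (σ ⁻¹' T) = m (σ ⁻¹' T ∩ K) + m (σ ⁻¹' T \ K) := (split _).symm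
    _ = m (T ∩ K) + m (invol ν ⁻¹' T \ K) := by rw [h1, h2]
    _ = m (T ∩ K) + p * ν (invol ν ⁻¹' T) := by rw [h3 _ ((measurable_invol ν) hT)]
    _ = m (T ∩ K) + p * ν T := by rw [hνmap T hT]
    _ = m (T ∩ K) + m (T \ K) := by rw [h3 _ hT]
    _ = m T := split _
  · -- a.e. involution
    rw [ae_iff]
    have hnull : m ((invol ν ⁻¹' K \ K) ∪ ({y | invol ν (invol ν y) ≠ y} \ K)) = 0 := by
      refine measure_union_null ?_ ?_
      · rw [diff_eq, ← hνrawT, hνrawν, Measure.smul_apply, smul_eq_mul]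
        have : ν (invol ν ⁻¹' K) = 0 := by
          rw [hνmap K hKm]; exact hK.measure_zero ν
        rw [this, mul_zero]
      · rw [diff_eq, ← hνrawT, hνrawν, Measure.smul_apply, smul_eq_mul]
        have : ν {y | invol ν (invol ν y) ≠ y} = 0 := by
          have := ae_invol_invol ν
          rwa [ae_iff] at this
        rw [this, mul_zero]
    refine measure_mono_null (fun y hy => ?_) hnull
    simp only [mem_setOf_eq] at hy
    by_cases hyK : y ∈ K
    · exact absurd (by rw [hσK y hyK, hσK y hyK]) hy
    · by_cases hiK : invol ν y ∈ K
      · exact Or.inl ⟨hiK, hyK⟩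
      · refine Or.inr ⟨?_, hyK⟩
        simp only [mem_setOf_eq]
        intro hc
        rw [hσnK y hyK, hσnK _ hiK] at hy
        exact hy hc
  · -- nontrivial
    intro hc
    have hsub : {y | invol ν y ≠ y} \ K ⊆ {y | σ y ≠ y} := by
      rintro y ⟨hy, hyK⟩
      simp only [mem_setOf_eq] at hy ⊢
      rw [hσnK y hyK]
      exact hy
    have h0 : m ({y | invol ν y ≠ y} \ K) = 0 :=
      measure_mono_null hsub hc
    rw [diff_eq, ← hνrawT, hνrawν, Measure.smul_apply, smul_eq_mul] at h0
    rcases mul_eq_zero.mp h0 with h | h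
    · exact hp h
    · -- ν {invol ≠ id} = 0 contradicts ν univ = 1 and ν {invol = id} = 0
      have h1 : ν univ ≤ ν {y | invol ν y = y} + ν {y | invol ν y ≠ y} := by
        rw [show (univ : Set ℝ) = {y | invol ν y = y} ∪ {y | invol ν y ≠ y} by
          ext y; simp [em]]
        exact measure_union_le _ _
      rw [measure_univ, null_invol_eq ν, h, zero_add] at h1
      exact absurd h1 (by norm_num)

end NTAuto

open NTAuto in
/-- Existence of nontrivial automorphisms: a probability measure on a standard
Borel space which is not purely atomic admits a nontrivial probability space
automorphism. -/
theorem exists_nontrivial_automorphism_of_not_purely_atomic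
    {X : Type*} [MeasurableSpace X] [StandardBorelSpace X]
    (μ : Measure X) [IsProbabilityMeasure μ]
    (hatoms : (∑' x : X, μ {x}) < 1) :
    ∃ φ ψ : X → X, Measurable φ ∧ Measurable ψ ∧
      μ.map φ = μ ∧ ψ ∘ φ =ᵐ[μ] id ∧ φ ∘ ψ =ᵐ[μ] id ∧ ¬ (φ =ᵐ[μ] id) := by
  classical
  haveI : Nonempty X := by
    refine Set.nonempty_iff_univ_nonempty.mpr (nonempty_of_measure_ne_zero (μ := μ) ?_)
    rw [measure_univ]; exact one_ne_zero
  obtain ⟨e, he⟩ := exists_measurableEmbedding_real X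
  set A : Set X := {x | μ {x} ≠ 0} with hA
  have hAc : A.Countable := by
    have := Summable.countable_support_ennreal
      (f := fun x : X => μ {x}) (hatoms.trans_le le_top).ne
    exact this
  have hμA : μ A = ∑' x : X, μ {x} := by
    have h1 : μ A = ∑' x : A, μ {(x : X)} := by
      conv_lhs => rw [← Set.biUnion_of_singleton A]
      exact measure_biUnion hAc
        (fun x hx y hy hxy => by simpa [Set.disjoint_singleton] using hxy)
        (fun x _ => measurableSet_singleton x)
    rw [h1]
    exact tsum_subtype_eq_of_support_subset (fun x hx => hx)
  set m : Measure ℝ := μ.map e with hm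
  haveI : IsProbabilityMeasure m := Measure.isProbabilityMeasure_map he.measurable.aemeasurable
  set K : Set ℝ := e '' A with hK
  have hKc : K.Countable := hAc.image e
  have hKm : MeasurableSet K := hKc.measurableSet
  have hmap_pre : ∀ S : Set ℝ, MeasurableSet S → m S = μ (e ⁻¹' S) := fun S hS =>
    Measure.map_apply he.measurable hS
  have hcont : ∀ y ∉ K, m {y} = 0 := by
    intro y hy
    rw [hmap_pre _ (measurableSet_singleton y)]
    by_cases hex : ∃ x : X, e x = y
    · obtain ⟨x, rfl⟩ := hex
      have hpre : e ⁻¹' {e x} = {x} := by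
        ext z
        simp only [mem_preimage, mem_singleton_iff]
        exact ⟨fun h => he.injective h, fun h => by rw [h]⟩
      rw [hpre]
      by_contra hc
      exact hy ⟨x, hc, rfl⟩
    · have hpre : e ⁻¹' {y} = ∅ := by
        ext z
        simp only [mem_preimage, mem_singleton_iff, mem_empty_iff_false, iff_false]
        exact fun h => hex ⟨z, h⟩
      rw [hpre, measure_empty]
  have hpre_compl : e ⁻¹' Kᶜ = Aᶜ := by
    rw [hK, preimage_compl, Set.preimage_image_eq A he.injective]
  have hp : m Kᶜ ≠ 0 := by
    rw [hmap_pre _ hKm.compl, hpre_compl]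
    intro hc
    have h1 : (1 : ℝ≥0∞) ≤ μ A + μ Aᶜ := by
      rw [← measure_univ (μ := μ), show (univ : Set X) = A ∪ Aᶜ by simp]
      exact measure_union_le _ _
    rw [hc, add_zero, hμA] at h1
    exact absurd h1 (not_le.2 hatoms)
  obtain ⟨σ, hσm, hσmap, hσinv, hσnt⟩ := real_case m K hKc hcont hp
  obtain ⟨ρ, hρm, hρe⟩ := he.exists_measurable_extend measurable_id (fun _ => ‹Nonempty X›)
  have hρe' : ∀ x : X, ρ (e x) = x := fun x => congrFun hρe x
  set φ : X → X := fun x => ρ (σ (e x)) with hφ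
  have hφm : Measurable φ := hρm.comp (hσm.comp he.measurable)
  have hmapφ : μ.map φ = μ := by
    have h1 : μ.map φ = ((μ.map e).map σ).map ρ := by
      rw [Measure.map_map hσm he.measurable, Measure.map_map hρm (hσm.comp he.measurable)]
      rfl
    rw [h1, ← hm, hσmap, hm, Measure.map_map hρm he.measurable, hρe, Measure.map_id]
  -- null sets
  have hrangem : MeasurableSet (range e) := he.measurableSet_range
  have hN1 : m (σ ⁻¹' (range e)ᶜ) = 0 := by
    have : m ((range e)ᶜ) = 0 := by
      rw [hmap_pre _ hrangem.compl]
      have : e ⁻¹' (range e)ᶜ = ∅ := by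
        ext z; simp
      rw [this, measure_empty]
    rw [← Measure.map_apply hσm hrangem.compl, hσmap]
    exact this
  have hN2 : m {y | σ (σ y) ≠ y} = 0 := by
    have := hσinv
    rwa [ae_iff] at this
  have hN2m : MeasurableSet {y | σ (σ y) ≠ y} := by
    have h := (measurableSet_eq_fun (β := ℝ) (hσm.comp hσm) measurable_id).compl
    rw [Set.compl_setOf] at h
    exact h
  have hNall : μ (e ⁻¹' (σ ⁻¹' (range e)ᶜ ∪ {y | σ (σ y) ≠ y})) = 0 := by
    rw [← hmap_pre _ ((hσm hrangem.compl).union hN2m)]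
    exact measure_union_null hN1 hN2
  have hae_inv : φ ∘ φ =ᵐ[μ] id := by
    rw [Filter.EventuallyEq, ae_iff]
    refine measure_mono_null (fun x hx => ?_) hNall
    simp only [mem_setOf_eq, Function.comp_apply, id_eq] at hx
    simp only [mem_preimage, mem_union, mem_setOf_eq, mem_compl_iff]
    by_contra hc
    push_neg at hc
    obtain ⟨h1, h2⟩ := hc
    obtain ⟨x', hx'⟩ := h1
    refine hx ?_
    show ρ (σ (e (ρ (σ (e x))))) = x
    rw [← hx', hρe' x', hx', h2, hρe' x]
  refine ⟨φ, φ, hφm, hφm, hmapφ, hae_inv, hae_inv, ?_⟩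
  intro hid
  have h1 : ∀ᵐ x ∂μ, σ (e x) ∈ range e := by
    rw [ae_iff]
    refine measure_mono_null (fun x hx => ?_)
      (by rw [← hmap_pre _ (hσm hrangem.compl)]; exact hN1)
    simpa using hx
  have h2 : ∀ᵐ x ∂μ, σ (e x) = e x := by
    filter_upwards [hid, h1] with x hx hr
    obtain ⟨x', hx'⟩ := hr
    have : e (φ x) = e x := by rw [hx]; rfl
    calc σ (e x) = e x' := hx'.symm
    _ = e (ρ (σ (e x))) := by rw [← hx', hρe' x']
    _ = e x := this
  have h3 : μ (e ⁻¹' {y | σ y ≠ y}) = 0 := by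
    rw [ae_iff] at h2
    refine measure_mono_null (fun x hx => ?_) h2
    simpa using hx
  have hsm : MeasurableSet {y | σ y ≠ y} := by
    have h := (measurableSet_eq_fun (β := ℝ) hσm measurable_id).compl
    rw [Set.compl_setOf] at h
    exact h
  rw [← hmap_pre _ hsm] at h3
  exact hσnt h3
end
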